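/- Let P be a maximal P2-packing of size j in a graph G. If G has a P2-packing of size j+1, then there exists a P2-packing Q of size j+1 with |V(P) ∩ V(Q)| ≥ 2.5·j, i.e., Q reuses at least 5j/2 of the 3j vertices of P. -/

import Mathlib

open Finset

def P2Verts {V : Type*} [DecidableEq V] (p : V × V × V) : Finset V := {p.1, p.2.1, p.2.2}

def IsP2 {V : Type*} (G : SimpleGraph V) (p : V × V × V) : Prop :=
  G.Adj p.1 p.2.1 ∧ G.Adj p.2.1 p.2.2 ∧ p.1 ≠ p.2.2

def IsP2Packing {V : Type*} [DecidableEq V] (G : SimpleGraph V) (P : Finset (V × V × V)) : Prop :=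
  (∀ p ∈ P, IsP2 G p) ∧
  ∀ p ∈ P, ∀ q ∈ P, p ≠ q → Disjoint (P2Verts p) (P2Verts q)

def PackVerts {V : Type*} [DecidableEq V] (P : Finset (V × V × V)) : Finset V :=
  P.biUnion P2Verts

def IsMaximalP2Packing {V : Type*} [DecidableEq V] (G : SimpleGraph V)
    (P : Finset (V × V × V)) : Prop :=
  IsP2Packing G P ∧ ∀ q, IsP2 G q → ¬ Disjoint (P2Verts q) (PackVerts P)

def P2Edges {V : Type*} [DecidableEq V] (p : V × V × V) : Finset (Sym2 V) :=
  {s(p.1, p.2.1), s(p.2.1, p.2.2)}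

namespace Stmt9

variable {V : Type*} [DecidableEq V] {G : SimpleGraph V}

def EP (P : Finset (V × V × V)) : Finset (Sym2 V) := P.biUnion P2Edges
def vA (P : Finset (V × V × V)) (q : V × V × V) : ℕ := (PackVerts P ∩ P2Verts q).card
def eB (P : Finset (V × V × V)) (q : V × V × V) : ℕ := (EP P ∩ P2Edges q).card
def score (P : Finset (V × V × V)) (j : ℕ) (Q : Finset (V × V × V)) : ℕ :=
  (2*j+3) * (PackVerts P ∩ PackVerts Q).card + (EP P ∩ EP Q).card

lemma mem_P2Verts {x : V} {p : V × V × V} :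
    x ∈ P2Verts p ↔ x = p.1 ∨ x = p.2.1 ∨ x = p.2.2 := by simp [P2Verts]

lemma mem_P2Edges {e : Sym2 V} {p : V × V × V} :
    e ∈ P2Edges p ↔ e = s(p.1, p.2.1) ∨ e = s(p.2.1, p.2.2) := by simp [P2Edges]

omit [DecidableEq V] in
lemma _root_.IsP2.ne12 {p : V × V × V} (h : IsP2 G p) : p.1 ≠ p.2.1 := h.1.ne
omit [DecidableEq V] in
lemma _root_.IsP2.ne23 {p : V × V × V} (h : IsP2 G p) : p.2.1 ≠ p.2.2 := h.2.1.ne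
omit [DecidableEq V] in
lemma _root_.IsP2.ne13 {p : V × V × V} (h : IsP2 G p) : p.1 ≠ p.2.2 := h.2.2

lemma card_P2Verts {p : V × V × V} (h : IsP2 G p) : (P2Verts p).card = 3 := by
  rw [P2Verts, card_insert_of_notMem (by simp [h.ne12, h.ne13]),
    card_insert_of_notMem (by simp [h.ne23]), card_singleton]

lemma card_P2Verts_le (p : V × V × V) : (P2Verts p).card ≤ 3 := by
  rw [P2Verts]
  refine (card_insert_le _ _).trans ?_
  have := (card_insert_le p.2.1 ({p.2.2} : Finset V))
  simp at this ⊢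
  omega

lemma card_P2Edges_le (p : V × V × V) : (P2Edges p).card ≤ 2 := by
  rw [P2Edges]
  refine (card_insert_le _ _).trans ?_
  simp

lemma mem_of_mem_edge {e : Sym2 V} {p : V × V × V} (he : e ∈ P2Edges p) {x : V}
    (hx : x ∈ e) : x ∈ P2Verts p := by
  rcases mem_P2Edges.1 he with h | h <;> subst h <;>
    rcases Sym2.mem_iff.1 hx with h | h <;> simp [mem_P2Verts, h]

lemma mid_mem_edge {e : Sym2 V} {p : V × V × V} (he : e ∈ P2Edges p) : p.2.1 ∈ e := by
  rcases mem_P2Edges.1 he with h | h <;> subst h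
  · exact Sym2.mem_mk_right _ _
  · exact Sym2.mem_mk_left _ _

lemma edge_adj {p : V × V × V} (h : IsP2 G p) {a b : V} (he : s(a, b) ∈ P2Edges p) :
    G.Adj a b := by
  rcases mem_P2Edges.1 he with h' | h' <;> rw [Sym2.eq_iff] at h' <;>
    rcases h' with ⟨rfl, rfl⟩ | ⟨rfl, rfl⟩
  · exact h.1
  · exact h.1.symm
  · exact h.2.1
  · exact h.2.1.symm

lemma mem_PackVerts {x : V} {P : Finset (V × V × V)} :
    x ∈ PackVerts P ↔ ∃ p ∈ P, x ∈ P2Verts p := by simp [PackVerts]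

lemma mem_EP {e : Sym2 V} {P : Finset (V × V × V)} :
    e ∈ EP P ↔ ∃ p ∈ P, e ∈ P2Edges p := by simp [EP]

lemma path_unique {P : Finset (V × V × V)} (hP : IsP2Packing G P) {p q : V × V × V}
    (hp : p ∈ P) (hq : q ∈ P) {x : V} (hxp : x ∈ P2Verts p) (hxq : x ∈ P2Verts q) :
    p = q := by
  by_contra hne
  exact Finset.disjoint_left.1 (hP.2 p hp q hq hne) hxp hxq

lemma P2Edges_disjoint {p q : V × V × V} (h : Disjoint (P2Verts p) (P2Verts q)) :
    Disjoint (P2Edges p) (P2Edges q) := by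
  rw [Finset.disjoint_left]
  intro e hep heq
  exact (Finset.disjoint_left.1 h) (mem_of_mem_edge hep (mid_mem_edge hep))
    (mem_of_mem_edge heq (mid_mem_edge hep))

lemma edge_same_path {P : Finset (V × V × V)} (hP : IsP2Packing G P) {p : V × V × V}
    (hp : p ∈ P) {a b : V} (ha : a ∈ P2Verts p) (h : s(a, b) ∈ EP P) :
    b ∈ P2Verts p ∧ s(a, b) ∈ P2Edges p := by
  obtain ⟨q, hq, he⟩ := mem_EP.1 h
  have haq : a ∈ P2Verts q := mem_of_mem_edge he (by simp)
  have : p = q := path_unique hP hp hq ha haq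
  subst this
  exact ⟨mem_of_mem_edge he (by simp), he⟩

lemma vA_eq (P : Finset (V × V × V)) (x y z : V) (hxy : x ≠ y) (hxz : x ≠ z) (hyz : y ≠ z) :
    vA P (x, y, z) = (if x ∈ PackVerts P then 1 else 0) + (if y ∈ PackVerts P then 1 else 0)
      + (if z ∈ PackVerts P then 1 else 0) := by
  rw [vA, inter_comm, ← Finset.filter_mem_eq_inter]
  show ((({x, y, z} : Finset V)).filter (· ∈ PackVerts P)).card = _
  rw [Finset.card_filter]
  rw [Finset.sum_insert (by simp [hxy, hxz]), Finset.sum_insert (by simp [hyz]),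
    Finset.sum_singleton]
  ring

lemma eB_eq (P : Finset (V × V × V)) (x y z : V) (hxz : x ≠ z) :
    eB P (x, y, z) = (if s(x, y) ∈ EP P then 1 else 0) + (if s(y, z) ∈ EP P then 1 else 0) := by
  rw [eB, inter_comm, ← Finset.filter_mem_eq_inter]
  show ((({s(x,y), s(y,z)} : Finset (Sym2 V))).filter (· ∈ EP P)).card = _
  rw [Finset.card_filter]
  rw [Finset.sum_insert (by
    rw [Finset.mem_singleton, Sym2.eq_iff]
    rintro (⟨h1, h2⟩ | ⟨h1, h2⟩)
    · exact hxz (h1.trans h2)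
    · exact hxz h1), Finset.sum_singleton]

lemma vA_le (P : Finset (V × V × V)) (q : V × V × V) : vA P q ≤ 3 :=
  le_trans (card_le_card inter_subset_right) (card_P2Verts_le q)

lemma eB_le (P : Finset (V × V × V)) (q : V × V × V) : eB P q ≤ 2 :=
  le_trans (card_le_card inter_subset_right) (card_P2Edges_le q)

lemma vA_self {P : Finset (V × V × V)} (hP : IsP2Packing G P) {p : V × V × V} (hp : p ∈ P) :
    vA P p = 3 := by
  rw [vA, Finset.inter_eq_right.2 (fun x hx => mem_PackVerts.2 ⟨p, hp, hx⟩)]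
  exact card_P2Verts (hP.1 p hp)

lemma eB_self {P : Finset (V × V × V)} (hP : IsP2Packing G P) {p : V × V × V} (hp : p ∈ P) :
    eB P p = 2 := by
  rw [eB, Finset.inter_eq_right.2 (fun e he => mem_EP.2 ⟨p, hp, he⟩), P2Edges]
  rw [card_insert_of_notMem (by
    rw [Finset.mem_singleton, Sym2.eq_iff]
    rintro (⟨h1, h2⟩ | ⟨h1, h2⟩)
    · exact (hP.1 p hp).ne13 (h1.trans h2)
    · exact (hP.1 p hp).ne13 h1), card_singleton]
-- part 2: sums, swap machinery

/-- pairwise disjointness hypothesis shorthand -/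
def PwDisj (R : Finset (V × V × V)) : Prop :=
  ∀ p ∈ R, ∀ q ∈ R, p ≠ q → Disjoint (P2Verts p) (P2Verts q)

lemma inter_packVerts_card (S : Finset V) {R : Finset (V × V × V)} (hR : PwDisj R) :
    (S ∩ PackVerts R).card = ∑ r ∈ R, (S ∩ P2Verts r).card := by
  have : S ∩ PackVerts R = R.biUnion (fun r => S ∩ P2Verts r) := by
    ext x; simp [PackVerts, mem_biUnion]; tauto
  rw [this, card_biUnion]
  intro p hp q hq hne
  exact Finset.disjoint_left.2 fun x hx1 hx2 =>
    Finset.disjoint_left.1 (hR p hp q hq hne) (mem_of_mem_inter_right hx1)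
      (mem_of_mem_inter_right hx2)

lemma inter_EP_card (S : Finset (Sym2 V)) {R : Finset (V × V × V)} (hR : PwDisj R) :
    (S ∩ EP R).card = ∑ r ∈ R, (S ∩ P2Edges r).card := by
  have : S ∩ EP R = R.biUnion (fun r => S ∩ P2Edges r) := by
    ext e; simp [EP, mem_biUnion]; tauto
  rw [this, card_biUnion]
  intro p hp q hq hne
  exact Finset.disjoint_left.2 fun e he1 he2 =>
    Finset.disjoint_left.1 (P2Edges_disjoint (hR p hp q hq hne))
      (mem_of_mem_inter_right he1) (mem_of_mem_inter_right he2)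

lemma score_eq (P : Finset (V × V × V)) (j : ℕ) {Q : Finset (V × V × V)} (hQ : PwDisj Q) :
    score P j Q = (2*j+3) * (∑ q ∈ Q, vA P q) + ∑ q ∈ Q, eB P q := by
  rw [score, inter_packVerts_card _ hQ, inter_EP_card _ hQ]; rfl

lemma packVerts_card {R : Finset (V × V × V)} (hR : IsP2Packing G R) :
    (PackVerts R).card = 3 * R.card := by
  rw [PackVerts, card_biUnion (fun p hp q hq hne => hR.2 p hp q hq hne)]
  rw [Finset.sum_congr rfl (fun p hp => card_P2Verts (hR.1 p hp))]
  simp [mul_comm]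

lemma exists_low {P Q : Finset (V × V × V)} (hP : IsP2Packing G P) (hQ : IsP2Packing G Q)
    {j : ℕ} (hPc : P.card = j) (hQc : Q.card = j + 1) :
    ∃ q ∈ Q, vA P q ≤ 2 := by
  by_contra h
  push_neg at h
  have hsum : (PackVerts P ∩ PackVerts Q).card = ∑ q ∈ Q, vA P q :=
    inter_packVerts_card _ hQ.2
  have h1 : (PackVerts P ∩ PackVerts Q).card ≤ 3 * j := by
    calc (PackVerts P ∩ PackVerts Q).card ≤ (PackVerts P).card :=
          card_le_card inter_subset_left
      _ = 3 * j := by rw [packVerts_card hP, hPc]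
  have h2 : ∀ q ∈ Q, vA P q = 3 := fun q hq => le_antisymm (vA_le P q) (h q hq)
  rw [hsum, Finset.sum_congr rfl h2, Finset.sum_const, hQc] at h1
  simp at h1
  omega

section Swap

variable {P Q : Finset (V × V × V)} {j : ℕ}

/-- The fundamental exchange inequality for a score-maximal packing. -/
lemma keyK (hP : IsP2Packing G P) (hQ : IsP2Packing G Q) (hQc : Q.card = j + 1)
    (hmax : ∀ R, IsP2Packing G R → R.card = j + 1 → score P j R ≤ score P j Q)
    {q r : V × V × V} (hq : q ∈ Q) (hr : IsP2 G r)
    (hsub : ∀ x ∈ P2Verts r, x ∈ PackVerts Q → x ∈ P2Verts q)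
    (hfree : ∃ x ∈ P2Verts r, x ∉ PackVerts Q) :
    (2*j+3) * vA P r + eB P r ≤ (2*j+3) * vA P q + eB P q := by
  obtain ⟨u, hur, huQ⟩ := hfree
  have hrQ : r ∉ Q := fun h => huQ (mem_PackVerts.2 ⟨r, h, hur⟩)
  set Q' : Finset (V × V × V) := insert r (Q.erase q) with hQ'def
  have hrE : r ∉ Q.erase q := fun h => hrQ (mem_of_mem_erase h)
  have hdisj : ∀ q' ∈ Q.erase q, Disjoint (P2Verts r) (P2Verts q') := by
    intro q' hq'
    refine Finset.disjoint_left.2 fun x hxr hxq' => ?_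
    have hxq : x ∈ P2Verts q :=
      hsub x hxr (mem_PackVerts.2 ⟨q', mem_of_mem_erase hq', hxq'⟩)
    have hne : q ≠ q' := fun h => (mem_erase.1 hq').1 h.symm
    exact Finset.disjoint_left.1 (hQ.2 q hq q' (mem_of_mem_erase hq') hne) hxq hxq'
  have hQ'pack : IsP2Packing G Q' := by
    constructor
    · intro p hp
      rcases mem_insert.1 hp with rfl | hp
      · exact hr
      · exact hQ.1 p (mem_of_mem_erase hp)
    · intro p hp p' hp' hne
      rcases mem_insert.1 hp with rfl | hpE <;> rcases mem_insert.1 hp' with rfl | hpE'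
      · exact absurd rfl hne
      · exact hdisj p' hpE'
      · exact (hdisj p hpE).symm
      · exact hQ.2 p (mem_of_mem_erase hpE) p' (mem_of_mem_erase hpE') hne
  have hQ'c : Q'.card = j + 1 := by
    rw [hQ'def, card_insert_of_notMem hrE, card_erase_of_mem hq, hQc]
    omega
  have hscore : score P j Q' + ((2*j+3) * vA P q + eB P q)
      = score P j Q + ((2*j+3) * vA P r + eB P r) := by
    rw [score_eq P j hQ.2, score_eq P j hQ'pack.2, hQ'def]
    rw [Finset.sum_insert hrE, Finset.sum_insert hrE]
    have e1 : ∑ x ∈ Q.erase q, vA P x + vA P q = ∑ x ∈ Q, vA P x :=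
      Finset.sum_erase_add _ _ hq
    have e2 : ∑ x ∈ Q.erase q, eB P x + eB P q = ∑ x ∈ Q, eB P x :=
      Finset.sum_erase_add _ _ hq
    rw [← e1, ← e2]
    ring
  have hle := hmax Q' hQ'pack hQ'c
  omega

lemma keyK1 (hP : IsP2Packing G P) (hQ : IsP2Packing G Q) (hQc : Q.card = j + 1)
    (hmax : ∀ R, IsP2Packing G R → R.card = j + 1 → score P j R ≤ score P j Q)
    {q r : V × V × V} (hq : q ∈ Q) (hr : IsP2 G r)
    (hsub : ∀ x ∈ P2Verts r, x ∈ PackVerts Q → x ∈ P2Verts q)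
    (hfree : ∃ x ∈ P2Verts r, x ∉ PackVerts Q) :
    vA P r ≤ vA P q := by
  by_contra h
  push_neg at h
  have hK := keyK hP hQ hQc hmax hq hr hsub hfree
  have h1 : vA P q + 1 ≤ vA P r := h
  have h2 := Nat.mul_le_mul_left (2*j+3) h1
  rw [Nat.mul_add, Nat.mul_one] at h2
  have h3 : (2*j+3) * vA P q + (2*j+3) ≤ (2*j+3) * vA P q + eB P q :=
    le_trans h2 (le_trans (Nat.le_add_right _ _) hK)
  have h4 : (2*j+3) ≤ eB P q := Nat.le_of_add_le_add_left h3
  have := eB_le P q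
  omega

lemma keyK2 (hP : IsP2Packing G P) (hQ : IsP2Packing G Q) (hQc : Q.card = j + 1)
    (hmax : ∀ R, IsP2Packing G R → R.card = j + 1 → score P j R ≤ score P j Q)
    {q r : V × V × V} (hq : q ∈ Q) (hr : IsP2 G r)
    (hsub : ∀ x ∈ P2Verts r, x ∈ PackVerts Q → x ∈ P2Verts q)
    (hfree : ∃ x ∈ P2Verts r, x ∉ PackVerts Q)
    (hA : vA P r = vA P q) : eB P r ≤ eB P q := by
  have hK := keyK hP hQ hQc hmax hq hr hsub hfree
  rw [hA] at hK
  omega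

end Swap

lemma eB_two {P : Finset (V × V × V)} (hP : IsP2Packing G P) {q : V × V × V}
    (hq : IsP2 G q) (h : eB P q = 2) : ∃ p ∈ P, P2Verts q = P2Verts p := by
  rw [eB_eq P q.1 q.2.1 q.2.2 hq.ne13] at h
  have h1 : s(q.1, q.2.1) ∈ EP P := by
    by_contra hc; rw [if_neg hc] at h; split_ifs at h <;> omega
  have h2 : s(q.2.1, q.2.2) ∈ EP P := by
    by_contra hc; rw [if_neg hc] at h; split_ifs at h <;> omega
  obtain ⟨p1, hp1, he1⟩ := mem_EP.1 h1
  obtain ⟨p2, hp2, he2⟩ := mem_EP.1 h2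
  have hm1 : q.2.1 ∈ P2Verts p1 := mem_of_mem_edge he1 (Sym2.mem_mk_right _ _)
  have hm2 : q.2.1 ∈ P2Verts p2 := mem_of_mem_edge he2 (Sym2.mem_mk_left _ _)
  have : p1 = p2 := path_unique hP hp1 hp2 hm1 hm2
  subst this
  refine ⟨p1, hp1, ?_⟩
  apply Finset.eq_of_subset_of_card_le
  · intro x hx
    rcases mem_P2Verts.1 hx with rfl | rfl | rfl
    · exact mem_of_mem_edge he1 (Sym2.mem_mk_left _ _)
    · exact hm1
    · exact mem_of_mem_edge he2 (Sym2.mem_mk_right _ _)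
  · rw [card_P2Verts (hP.1 p1 hp1), card_P2Verts hq]

lemma third_of_edge {p : V × V × V} {c d : V} (h : s(c, d) ∈ P2Edges p) :
    ∃ w, w ∈ P2Verts p ∧ ∀ x ∈ P2Verts p, x = c ∨ x = d ∨ x = w := by
  rcases mem_P2Edges.1 h with h' | h' <;> rw [Sym2.eq_iff] at h' <;>
    rcases h' with ⟨rfl, rfl⟩ | ⟨h1, h2⟩
  · exact ⟨p.2.2, by simp [mem_P2Verts], fun x hx => by
      rcases mem_P2Verts.1 hx with rfl | rfl | rfl <;> tauto⟩
  · exact ⟨p.2.2, by simp [mem_P2Verts], fun x hx => by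
      rcases mem_P2Verts.1 hx with rfl | rfl | rfl <;> subst h1 <;> subst h2 <;> tauto⟩
  · exact ⟨p.1, by simp [mem_P2Verts], fun x hx => by
      rcases mem_P2Verts.1 hx with rfl | rfl | rfl <;> tauto⟩
  · exact ⟨p.1, by simp [mem_P2Verts], fun x hx => by
      rcases mem_P2Verts.1 hx with rfl | rfl | rfl <;> subst h1 <;> subst h2 <;> tauto⟩
-- part 3 : M1
section M

variable {P Q : Finset (V × V × V)} {j : ℕ}
variable (hP : IsP2Packing G P) (hQ : IsP2Packing G Q)
  (hPc : P.card = j) (hQc : Q.card = j + 1)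
  (hmax : ∀ R, IsP2Packing G R → R.card = j + 1 → score P j R ≤ score P j Q)

include hP hQ hPc hQc hmax

lemma M1core {p : V × V × V} (hp : p ∈ P) {u w t : V}
    (hu : u ∈ P2Verts p) (ht : t ∈ P2Verts p)
    (huQ : u ∉ PackVerts Q) (hwQ : w ∉ PackVerts Q)
    (hchar : ∀ x ∈ P2Verts p, x = u ∨ x = w ∨ x = t) : False := by
  have hpP2 : IsP2 G p := hP.1 p hp
  by_cases htQ : t ∈ PackVerts Q
  · obtain ⟨q0, hq0, htq0⟩ := mem_PackVerts.1 htQ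
    have hsub : ∀ x ∈ P2Verts p, x ∈ PackVerts Q → x ∈ P2Verts q0 := by
      intro x hxp hxQ
      rcases hchar x hxp with rfl | rfl | rfl
      · exact absurd hxQ huQ
      · exact absurd hxQ hwQ
      · exact htq0
    have hK1 := keyK1 hP hQ hQc hmax hq0 hpP2 hsub ⟨u, hu, huQ⟩
    have hA0 : vA P q0 = 3 := le_antisymm (vA_le P q0) (by rw [vA_self hP hp] at hK1; omega)
    have hK2 := keyK2 hP hQ hQc hmax hq0 hpP2 hsub ⟨u, hu, huQ⟩
      (by rw [vA_self hP hp, hA0])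
    have hB0 : eB P q0 = 2 := le_antisymm (eB_le P q0) (by rw [eB_self hP hp] at hK2; omega)
    obtain ⟨p'', hp'', hveq⟩ := eB_two hP (hQ.1 q0 hq0) hB0
    have : p = p'' := path_unique hP hp hp'' ht (hveq ▸ htq0)
    subst this
    exact huQ (mem_PackVerts.2 ⟨q0, hq0, hveq ▸ hu⟩)
  · obtain ⟨q0, hq0, hlow⟩ := exists_low hP hQ hPc hQc
    have hsub : ∀ x ∈ P2Verts p, x ∈ PackVerts Q → x ∈ P2Verts q0 := by
      intro x hxp hxQ
      rcases hchar x hxp with rfl | rfl | rfl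
      · exact absurd hxQ huQ
      · exact absurd hxQ hwQ
      · exact absurd hxQ htQ
    have hK1 := keyK1 hP hQ hQc hmax hq0 hpP2 hsub ⟨u, hu, huQ⟩
    rw [vA_self hP hp] at hK1
    omega

lemma M1 {p : V × V × V} (hp : p ∈ P) {u w : V}
    (hu : u ∈ P2Verts p) (hw : w ∈ P2Verts p) (huw : u ≠ w)
    (huQ : u ∉ PackVerts Q) (hwQ : w ∉ PackVerts Q) : False := by
  have hpP2 : IsP2 G p := hP.1 p hp
  have m1 : p.1 ∈ P2Verts p := mem_P2Verts.2 (Or.inl rfl)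
  have m2 : p.2.1 ∈ P2Verts p := mem_P2Verts.2 (Or.inr (Or.inl rfl))
  have m3 : p.2.2 ∈ P2Verts p := mem_P2Verts.2 (Or.inr (Or.inr rfl))
  rcases mem_P2Verts.1 hu with rfl | rfl | rfl <;> rcases mem_P2Verts.1 hw with rfl | rfl | rfl
  · exact huw rfl
  · refine M1core hP hQ hPc hQc hmax hp hu m3 huQ hwQ fun x hx => ?_
    rcases mem_P2Verts.1 hx with rfl | rfl | rfl <;> tauto
  · refine M1core hP hQ hPc hQc hmax hp hu m2 huQ hwQ fun x hx => ?_
    rcases mem_P2Verts.1 hx with rfl | rfl | rfl <;> tauto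
  · refine M1core hP hQ hPc hQc hmax hp hu m3 huQ hwQ fun x hx => ?_
    rcases mem_P2Verts.1 hx with rfl | rfl | rfl <;> tauto
  · exact huw rfl
  · refine M1core hP hQ hPc hQc hmax hp hu m1 huQ hwQ fun x hx => ?_
    rcases mem_P2Verts.1 hx with rfl | rfl | rfl <;> tauto
  · refine M1core hP hQ hPc hQc hmax hp hu m2 huQ hwQ fun x hx => ?_
    rcases mem_P2Verts.1 hx with rfl | rfl | rfl <;> tauto
  · refine M1core hP hQ hPc hQc hmax hp hu m1 huQ hwQ fun x hx => ?_
    rcases mem_P2Verts.1 hx with rfl | rfl | rfl <;> tauto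
  · exact huw rfl

end M
-- part 4 : M2
section M2

variable {P Q : Finset (V × V × V)} {j : ℕ}
variable (hP : IsP2Packing G P) (hQ : IsP2Packing G Q)
  (hPc : P.card = j) (hQc : Q.card = j + 1)
  (hmax : ∀ R, IsP2Packing G R → R.card = j + 1 → score P j R ≤ score P j Q)

include hP hQ hPc hQc hmax

lemma M2 {p : V × V × V} (hp : p ∈ P) {u : V}
    (hu : u ∈ P2Verts p) (huQ : u ∉ PackVerts Q) :
    ∃ q ∈ Q, ∃ p' ∈ P, p' ≠ p ∧ P2Verts p' ⊆ PackVerts Q ∧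
      ∃ v, v ∈ P2Verts p ∧ ((v = q.1 ∧ s(q.2.1, q.2.2) ∈ P2Edges p') ∨
        (v = q.2.2 ∧ s(q.1, q.2.1) ∈ P2Edges p')) := by
  have hpP2 : IsP2 G p := hP.1 p hp
  obtain ⟨v, hve, hvu⟩ : ∃ v, s(u, v) ∈ P2Edges p ∧ v ≠ u := by
    rcases mem_P2Verts.1 hu with h | h | h
    · exact ⟨p.2.1, by rw [h]; exact mem_P2Edges.2 (Or.inl rfl), h ▸ hpP2.ne12.symm⟩
    · exact ⟨p.1, by rw [h, Sym2.eq_swap]; exact mem_P2Edges.2 (Or.inl rfl), h ▸ hpP2.ne12⟩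
    · exact ⟨p.2.1, by rw [h, Sym2.eq_swap]; exact mem_P2Edges.2 (Or.inr rfl), h ▸ hpP2.ne23⟩
  have hvp : v ∈ P2Verts p := mem_of_mem_edge hve (Sym2.mem_mk_right _ _)
  have hAdjuv : G.Adj u v := edge_adj hpP2 hve
  have hvQ : v ∈ PackVerts Q := by
    by_contra hvQ
    exact M1 hP hQ hPc hQc hmax hp hu hvp (Ne.symm hvu) huQ hvQ
  obtain ⟨t, htp, hchar⟩ := third_of_edge hve
  obtain ⟨q, hq, hvq⟩ := mem_PackVerts.1 hvQ
  have hqP2 : IsP2 G q := hQ.1 q hq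
  have hmemQ : ∀ x, x ∈ P2Verts q → x ∈ PackVerts Q := fun x hx => mem_PackVerts.2 ⟨q, hq, hx⟩
  have hu1 : u ≠ q.1 := fun h => huQ (h ▸ hmemQ q.1 (mem_P2Verts.2 (Or.inl rfl)))
  have hu2 : u ≠ q.2.1 := fun h => huQ (h ▸ hmemQ q.2.1 (mem_P2Verts.2 (Or.inr (Or.inl rfl))))
  have hu3 : u ≠ q.2.2 := fun h => huQ (h ▸ hmemQ q.2.2 (mem_P2Verts.2 (Or.inr (Or.inr rfl))))
  have huVP : u ∈ PackVerts P := mem_PackVerts.2 ⟨p, hp, hu⟩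
  have hvVP : v ∈ PackVerts P := mem_PackVerts.2 ⟨p, hp, hvp⟩
  have hEuv : s(u, v) ∈ EP P := mem_EP.2 ⟨p, hp, hve⟩
  have e2 : vA P q = (if q.1 ∈ PackVerts P then 1 else 0)
      + (if q.2.1 ∈ PackVerts P then 1 else 0) + (if q.2.2 ∈ PackVerts P then 1 else 0) :=
    vA_eq P q.1 q.2.1 q.2.2 hqP2.ne12 hqP2.ne13 hqP2.ne23
  have e4 : eB P q = (if s(q.1, q.2.1) ∈ EP P then 1 else 0)
      + (if s(q.2.1, q.2.2) ∈ EP P then 1 else 0) := eB_eq P q.1 q.2.1 q.2.2 hqP2.ne13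
  rcases mem_P2Verts.1 hvq with hv | hv | hv
  -- Case v = q.1 : v is the first endpoint of q
  · subst hv
    have hrP2 : IsP2 G (u, q.1, q.2.1) := ⟨hAdjuv, hqP2.1, hu2⟩
    have hsub : ∀ x ∈ P2Verts (u, q.1, q.2.1), x ∈ PackVerts Q → x ∈ P2Verts q := by
      intro x hx hxQ
      rcases mem_P2Verts.1 hx with rfl | rfl | rfl
      · exact absurd hxQ huQ
      · exact mem_P2Verts.2 (Or.inl rfl)
      · exact mem_P2Verts.2 (Or.inr (Or.inl rfl))
    have hfree : ∃ x ∈ P2Verts (u, q.1, q.2.1), x ∉ PackVerts Q :=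
      ⟨u, mem_P2Verts.2 (Or.inl rfl), huQ⟩
    have e1 : vA P (u, q.1, q.2.1) = (if u ∈ PackVerts P then 1 else 0)
        + (if q.1 ∈ PackVerts P then 1 else 0) + (if q.2.1 ∈ PackVerts P then 1 else 0) :=
      vA_eq P u q.1 q.2.1 hu1 hu2 hqP2.ne12
    have hK1 := keyK1 hP hQ hQc hmax hq hrP2 hsub hfree
    rw [e1, e2, if_pos huVP, if_pos hvVP] at hK1
    have h22 : q.2.2 ∈ PackVerts P := by
      by_contra hc
      rw [if_neg hc] at hK1
      split_ifs at hK1 <;> omega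
    have hAeq : vA P (u, q.1, q.2.1) = vA P q := by
      rw [e1, e2, if_pos huVP, if_pos hvVP, if_pos h22]
      split_ifs <;> omega
    have hK2 := keyK2 hP hQ hQc hmax hq hrP2 hsub hfree hAeq
    have e3 : eB P (u, q.1, q.2.1) = (if s(u, q.1) ∈ EP P then 1 else 0)
        + (if s(q.1, q.2.1) ∈ EP P then 1 else 0) := eB_eq P u q.1 q.2.1 hu2
    rw [e3, e4, if_pos hEuv] at hK2
    have hyz : s(q.2.1, q.2.2) ∈ EP P := by
      by_contra hc
      rw [if_neg hc] at hK2
      split_ifs at hK2 <;> omega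
    obtain ⟨p', hp', hep'⟩ := mem_EP.1 hyz
    have hc1 : q.2.1 ∈ P2Verts p' := mem_of_mem_edge hep' (Sym2.mem_mk_left _ _)
    have hc2 : q.2.2 ∈ P2Verts p' := mem_of_mem_edge hep' (Sym2.mem_mk_right _ _)
    have hp'ne : p' ≠ p := by
      rintro rfl
      have h1 := hchar q.2.1 hc1
      have h2 := hchar q.2.2 hc2
      rcases h1 with h1 | h1 | h1
      · exact hu2 h1.symm
      · exact hqP2.ne12 h1.symm
      · rcases h2 with h2 | h2 | h2
        · exact hu3 h2.symm
        · exact hqP2.ne13 h2.symm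
        · exact hqP2.ne23 (h1.trans h2.symm)
    obtain ⟨w, hwp', hchar'⟩ := third_of_edge hep'
    by_cases hwQ : w ∈ PackVerts Q
    · refine ⟨q, hq, p', hp', hp'ne, ?_, q.1, hvp, Or.inl ⟨rfl, hep'⟩⟩
      intro x hx
      rcases hchar' x hx with rfl | rfl | rfl
      · exact hmemQ _ (mem_P2Verts.2 (Or.inr (Or.inl rfl)))
      · exact hmemQ _ (mem_P2Verts.2 (Or.inr (Or.inr rfl)))
      · exact hwQ
    · exfalso
      have hp'P2 : IsP2 G p' := hP.1 p' hp'
      have hsub2 : ∀ x ∈ P2Verts p', x ∈ PackVerts Q → x ∈ P2Verts q := by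
        intro x hx hxQ
        rcases hchar' x hx with rfl | rfl | rfl
        · exact mem_P2Verts.2 (Or.inr (Or.inl rfl))
        · exact mem_P2Verts.2 (Or.inr (Or.inr rfl))
        · exact absurd hxQ hwQ
      have h21VP : q.2.1 ∈ PackVerts P := mem_PackVerts.2 ⟨p', hp', hc1⟩
      have hAq3 : vA P q = 3 := by
        rw [e2, if_pos hvVP, if_pos h21VP, if_pos h22]
      have hK2' := keyK2 hP hQ hQc hmax hq hp'P2 hsub2 ⟨w, hwp', hwQ⟩
        (by rw [vA_self hP hp', hAq3])
      rw [eB_self hP hp', e4] at hK2'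
      have hxy : s(q.1, q.2.1) ∉ EP P := by
        intro hc
        obtain ⟨hmem, -⟩ := edge_same_path hP hp hvp hc
        exact hp'ne (path_unique hP hp' hp hc1 hmem)
      rw [if_neg hxy, if_pos hyz] at hK2'
      omega
  -- Case v = q.2.1 : v is the middle of q; derive a contradiction
  · exfalso
    subst hv
    have hrP2 : IsP2 G (u, q.2.1, q.2.2) := ⟨hAdjuv, hqP2.2.1, hu3⟩
    have hsub : ∀ x ∈ P2Verts (u, q.2.1, q.2.2), x ∈ PackVerts Q → x ∈ P2Verts q := by
      intro x hx hxQ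
      rcases mem_P2Verts.1 hx with rfl | rfl | rfl
      · exact absurd hxQ huQ
      · exact mem_P2Verts.2 (Or.inr (Or.inl rfl))
      · exact mem_P2Verts.2 (Or.inr (Or.inr rfl))
    have hfree : ∃ x ∈ P2Verts (u, q.2.1, q.2.2), x ∉ PackVerts Q :=
      ⟨u, mem_P2Verts.2 (Or.inl rfl), huQ⟩
    have e1 : vA P (u, q.2.1, q.2.2) = (if u ∈ PackVerts P then 1 else 0)
        + (if q.2.1 ∈ PackVerts P then 1 else 0) + (if q.2.2 ∈ PackVerts P then 1 else 0) :=
      vA_eq P u q.2.1 q.2.2 hu2 hu3 hqP2.ne23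
    have hK1 := keyK1 hP hQ hQc hmax hq hrP2 hsub hfree
    rw [e1, e2, if_pos huVP, if_pos hvVP] at hK1
    have h11 : q.1 ∈ PackVerts P := by
      by_contra hc
      rw [if_neg hc] at hK1
      split_ifs at hK1 <;> omega
    have hAeq : vA P (u, q.2.1, q.2.2) = vA P q := by
      rw [e1, e2, if_pos huVP, if_pos hvVP, if_pos h11]
    have hK2 := keyK2 hP hQ hQc hmax hq hrP2 hsub hfree hAeq
    have e3 : eB P (u, q.2.1, q.2.2) = (if s(u, q.2.1) ∈ EP P then 1 else 0)
        + (if s(q.2.1, q.2.2) ∈ EP P then 1 else 0) := eB_eq P u q.2.1 q.2.2 hu3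
    rw [e3, e4, if_pos hEuv] at hK2
    have hxy : s(q.1, q.2.1) ∈ EP P := by
      by_contra hc
      rw [if_neg hc] at hK2
      split_ifs at hK2 <;> omega
    have hxy' : s(q.2.1, q.1) ∈ EP P := Sym2.eq_swap ▸ hxy
    obtain ⟨hq1p, -⟩ := edge_same_path hP hp hvp hxy'
    have hq1t : q.1 = t := by
      rcases hchar q.1 hq1p with h | h | h
      · exact absurd h.symm hu1
      · exact absurd h hqP2.ne12
      · exact h
    have hr2P2 : IsP2 G (q.1, q.2.1, u) := ⟨hqP2.1, hAdjuv.symm, hu1.symm⟩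
    have hsub2 : ∀ x ∈ P2Verts (q.1, q.2.1, u), x ∈ PackVerts Q → x ∈ P2Verts q := by
      intro x hx hxQ
      rcases mem_P2Verts.1 hx with rfl | rfl | rfl
      · exact mem_P2Verts.2 (Or.inl rfl)
      · exact mem_P2Verts.2 (Or.inr (Or.inl rfl))
      · exact absurd hxQ huQ
    have hfree2 : ∃ x ∈ P2Verts (q.1, q.2.1, u), x ∉ PackVerts Q :=
      ⟨u, mem_P2Verts.2 (Or.inr (Or.inr rfl)), huQ⟩
    have e5 : vA P (q.1, q.2.1, u) = (if q.1 ∈ PackVerts P then 1 else 0)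
        + (if q.2.1 ∈ PackVerts P then 1 else 0) + (if u ∈ PackVerts P then 1 else 0) :=
      vA_eq P q.1 q.2.1 u hqP2.ne12 hu1.symm hu2.symm
    have hK1' := keyK1 hP hQ hQc hmax hq hr2P2 hsub2 hfree2
    rw [e5, e2, if_pos h11, if_pos hvVP, if_pos huVP] at hK1'
    have h22 : q.2.2 ∈ PackVerts P := by
      by_contra hc
      rw [if_neg hc] at hK1'
      omega
    have hAeq2 : vA P (q.1, q.2.1, u) = vA P q := by
      rw [e5, e2, if_pos h11, if_pos hvVP, if_pos huVP, if_pos h22]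
    have hK2' := keyK2 hP hQ hQc hmax hq hr2P2 hsub2 hfree2 hAeq2
    have e6 : eB P (q.1, q.2.1, u) = (if s(q.1, q.2.1) ∈ EP P then 1 else 0)
        + (if s(q.2.1, u) ∈ EP P then 1 else 0) := eB_eq P q.1 q.2.1 u hu1.symm
    have hEvu : s(q.2.1, u) ∈ EP P := Sym2.eq_swap ▸ hEuv
    rw [e6, e4, if_pos hxy, if_pos hEvu] at hK2'
    have hyz : s(q.2.1, q.2.2) ∈ EP P := by
      by_contra hc
      rw [if_neg hc] at hK2'
      omega
    obtain ⟨hmem, -⟩ := edge_same_path hP hp hvp hyz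
    rcases hchar q.2.2 hmem with h | h | h
    · exact hu3 h.symm
    · exact hqP2.ne23 h.symm
    · exact hqP2.ne13 (hq1t.trans h.symm)
  -- Case v = q.2.2 : v is the last endpoint of q
  · subst hv
    have hrP2 : IsP2 G (u, q.2.2, q.2.1) := ⟨hAdjuv, hqP2.2.1.symm, hu2⟩
    have hsub : ∀ x ∈ P2Verts (u, q.2.2, q.2.1), x ∈ PackVerts Q → x ∈ P2Verts q := by
      intro x hx hxQ
      rcases mem_P2Verts.1 hx with rfl | rfl | rfl
      · exact absurd hxQ huQ
      · exact mem_P2Verts.2 (Or.inr (Or.inr rfl))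
      · exact mem_P2Verts.2 (Or.inr (Or.inl rfl))
    have hfree : ∃ x ∈ P2Verts (u, q.2.2, q.2.1), x ∉ PackVerts Q :=
      ⟨u, mem_P2Verts.2 (Or.inl rfl), huQ⟩
    have e1 : vA P (u, q.2.2, q.2.1) = (if u ∈ PackVerts P then 1 else 0)
        + (if q.2.2 ∈ PackVerts P then 1 else 0) + (if q.2.1 ∈ PackVerts P then 1 else 0) :=
      vA_eq P u q.2.2 q.2.1 hu3 hu2 hqP2.ne23.symm
    have hK1 := keyK1 hP hQ hQc hmax hq hrP2 hsub hfree
    rw [e1, e2, if_pos huVP, if_pos hvVP] at hK1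
    have h11 : q.1 ∈ PackVerts P := by
      by_contra hc
      rw [if_neg hc] at hK1
      split_ifs at hK1 <;> omega
    have hAeq : vA P (u, q.2.2, q.2.1) = vA P q := by
      rw [e1, e2, if_pos huVP, if_pos hvVP, if_pos h11]
      split_ifs <;> omega
    have hK2 := keyK2 hP hQ hQc hmax hq hrP2 hsub hfree hAeq
    have e3 : eB P (u, q.2.2, q.2.1) = (if s(u, q.2.2) ∈ EP P then 1 else 0)
        + (if s(q.2.2, q.2.1) ∈ EP P then 1 else 0) := eB_eq P u q.2.2 q.2.1 hu2
    rw [show s(q.2.2, q.2.1) = s(q.2.1, q.2.2) from Sym2.eq_swap] at e3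
    rw [e3, e4, if_pos hEuv] at hK2
    have hxy : s(q.1, q.2.1) ∈ EP P := by
      by_contra hc
      rw [if_neg hc] at hK2
      split_ifs at hK2 <;> omega
    obtain ⟨p', hp', hep'⟩ := mem_EP.1 hxy
    have hc1 : q.1 ∈ P2Verts p' := mem_of_mem_edge hep' (Sym2.mem_mk_left _ _)
    have hc2 : q.2.1 ∈ P2Verts p' := mem_of_mem_edge hep' (Sym2.mem_mk_right _ _)
    have hp'ne : p' ≠ p := by
      rintro rfl
      have h1 := hchar q.1 hc1
      have h2 := hchar q.2.1 hc2
      rcases h1 with h1 | h1 | h1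
      · exact hu1 h1.symm
      · exact hqP2.ne13 h1
      · rcases h2 with h2 | h2 | h2
        · exact hu2 h2.symm
        · exact hqP2.ne23 h2
        · exact hqP2.ne12 (h1.trans h2.symm)
    obtain ⟨w, hwp', hchar'⟩ := third_of_edge hep'
    by_cases hwQ : w ∈ PackVerts Q
    · refine ⟨q, hq, p', hp', hp'ne, ?_, q.2.2, hvp, Or.inr ⟨rfl, hep'⟩⟩
      intro x hx
      rcases hchar' x hx with rfl | rfl | rfl
      · exact hmemQ _ (mem_P2Verts.2 (Or.inl rfl))
      · exact hmemQ _ (mem_P2Verts.2 (Or.inr (Or.inl rfl)))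
      · exact hwQ
    · exfalso
      have hp'P2 : IsP2 G p' := hP.1 p' hp'
      have hsub2 : ∀ x ∈ P2Verts p', x ∈ PackVerts Q → x ∈ P2Verts q := by
        intro x hx hxQ
        rcases hchar' x hx with rfl | rfl | rfl
        · exact mem_P2Verts.2 (Or.inl rfl)
        · exact mem_P2Verts.2 (Or.inr (Or.inl rfl))
        · exact absurd hxQ hwQ
      have h21VP : q.2.1 ∈ PackVerts P := mem_PackVerts.2 ⟨p', hp', hc2⟩
      have hAq3 : vA P q = 3 := by
        rw [e2, if_pos h11, if_pos h21VP, if_pos hvVP]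
      have hK2' := keyK2 hP hQ hQc hmax hq hp'P2 hsub2 ⟨w, hwp', hwQ⟩
        (by rw [vA_self hP hp', hAq3])
      rw [eB_self hP hp', e4] at hK2'
      have hyz : s(q.2.1, q.2.2) ∉ EP P := by
        intro hc
        have hc' : s(q.2.2, q.2.1) ∈ EP P := Sym2.eq_swap ▸ hc
        obtain ⟨hmem, -⟩ := edge_same_path hP hp hvp hc'
        exact hp'ne (path_unique hP hp' hp hc2 hmem)
      rw [if_neg hyz, if_pos hxy] at hK2'
      omega

end M2
-- part 5 : final assembly
end Stmt9

open Stmt9 in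
theorem stmt9 {V : Type*} [DecidableEq V] (G : SimpleGraph V)
    (P : Finset (V × V × V)) (j : ℕ)
    (hP : IsMaximalP2Packing G P) (hj : P.card = j)
    (hex : ∃ Q : Finset (V × V × V), IsP2Packing G Q ∧ Q.card = j + 1) :
    ∃ Q : Finset (V × V × V), IsP2Packing G Q ∧ Q.card = j + 1 ∧
      5 * j ≤ 2 * (PackVerts P ∩ PackVerts Q).card := by
  classical
  obtain ⟨hPpack, -⟩ := hP
  obtain ⟨Q0, hQ0, hQ0c⟩ := hex
  set S : Set ℕ := {n | ∃ R : Finset (V × V × V),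
    IsP2Packing G R ∧ R.card = j + 1 ∧ score P j R = n} with hSdef
  have hSne : S.Nonempty := ⟨score P j Q0, Q0, hQ0, hQ0c, rfl⟩
  have hSbdd : BddAbove S := by
    refine ⟨(2*j+3) * (3*(j+1)) + 2*(j+1), ?_⟩
    rintro n ⟨R, hR, hRc, rfl⟩
    have h1 : (PackVerts P ∩ PackVerts R).card ≤ 3*(j+1) := by
      calc (PackVerts P ∩ PackVerts R).card ≤ (PackVerts R).card :=
            card_le_card inter_subset_right
        _ = 3*(j+1) := by rw [packVerts_card hR, hRc]
    have h2 : (EP P ∩ EP R).card ≤ 2*(j+1) := by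
      calc (EP P ∩ EP R).card ≤ (EP R).card := card_le_card inter_subset_right
        _ ≤ ∑ r ∈ R, (P2Edges r).card := Finset.card_biUnion_le
        _ ≤ ∑ _r ∈ R, 2 := Finset.sum_le_sum (fun r _ => card_P2Edges_le r)
        _ = 2*(j+1) := by rw [Finset.sum_const, hRc, smul_eq_mul, mul_comm]
    exact Nat.add_le_add (Nat.mul_le_mul_left _ h1) h2
  obtain ⟨Q, hQpack, hQc, hQscore⟩ := Nat.sSup_mem hSne hSbdd
  have hmax : ∀ R, IsP2Packing G R → R.card = j + 1 → score P j R ≤ score P j Q :=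
    fun R hR hRc => hQscore ▸ le_csSup hSbdd ⟨R, hR, hRc, rfl⟩
  refine ⟨Q, hQpack, hQc, ?_⟩
  set D : Finset (V × V × V) := P.filter (fun p => ¬ (P2Verts p ⊆ PackVerts Q)) with hD
  have hDP : D ⊆ P := filter_subset _ _
  have hAsum : (PackVerts P ∩ PackVerts Q).card
      = ∑ p ∈ P, (PackVerts Q ∩ P2Verts p).card := by
    rw [inter_comm]
    exact inter_packVerts_card _ hPpack.2
  have hcov3 : ∀ p ∈ P \ D, (PackVerts Q ∩ P2Verts p).card = 3 := by
    intro p hp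
    rw [mem_sdiff] at hp
    have hsubQ : P2Verts p ⊆ PackVerts Q := by
      by_contra hc
      exact hp.2 (by rw [hD, mem_filter]; exact ⟨hp.1, hc⟩)
    rw [Finset.inter_eq_right.2 hsubQ]
    exact card_P2Verts (hPpack.1 p hp.1)
  have hcov2 : ∀ p ∈ D, 2 ≤ (PackVerts Q ∩ P2Verts p).card := by
    intro p hpD
    have hpP : p ∈ P := hDP hpD
    have hpP2 : IsP2 G p := hPpack.1 p hpP
    have m1 : p.1 ∈ P2Verts p := mem_P2Verts.2 (Or.inl rfl)
    have m2 : p.2.1 ∈ P2Verts p := mem_P2Verts.2 (Or.inr (Or.inl rfl))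
    have m3 : p.2.2 ∈ P2Verts p := mem_P2Verts.2 (Or.inr (Or.inr rfl))
    have hpair12 : p.1 ∈ PackVerts Q ∨ p.2.1 ∈ PackVerts Q := by
      by_contra hc
      push_neg at hc
      exact M1 hPpack hQpack hj hQc hmax hpP m1 m2 hpP2.ne12 hc.1 hc.2
    have hpair13 : p.1 ∈ PackVerts Q ∨ p.2.2 ∈ PackVerts Q := by
      by_contra hc
      push_neg at hc
      exact M1 hPpack hQpack hj hQc hmax hpP m1 m3 hpP2.ne13 hc.1 hc.2
    have hpair23 : p.2.1 ∈ PackVerts Q ∨ p.2.2 ∈ PackVerts Q := by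
      by_contra hc
      push_neg at hc
      exact M1 hPpack hQpack hj hQc hmax hpP m2 m3 hpP2.ne23 hc.1 hc.2
    rw [show (PackVerts Q ∩ P2Verts p).card = vA Q p from rfl,
      vA_eq Q p.1 p.2.1 p.2.2 hpP2.ne12 hpP2.ne13 hpP2.ne23]
    split_ifs <;> first | omega | tauto
  have hMsum : 3 * (P \ D).card + 2 * D.card ≤ (PackVerts P ∩ PackVerts Q).card := by
    rw [hAsum, ← Finset.sum_sdiff hDP]
    have h1 : ∑ p ∈ P \ D, (PackVerts Q ∩ P2Verts p).card = 3 * (P \ D).card := by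
      rw [Finset.sum_congr rfl hcov3, Finset.sum_const, smul_eq_mul, mul_comm]
    have h2 : 2 * D.card ≤ ∑ p ∈ D, (PackVerts Q ∩ P2Verts p).card := by
      calc 2 * D.card = ∑ _p ∈ D, 2 := by rw [Finset.sum_const, smul_eq_mul, mul_comm]
        _ ≤ _ := Finset.sum_le_sum hcov2
    omega
  -- the injection D → P \ D
  have hM2' : ∀ p, p ∈ D → ∃ qp' : (V × V × V) × (V × V × V), qp'.1 ∈ Q ∧ qp'.2 ∈ P ∧
      qp'.2 ≠ p ∧ P2Verts qp'.2 ⊆ PackVerts Q ∧ ∃ v, v ∈ P2Verts p ∧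
      ((v = qp'.1.1 ∧ s(qp'.1.2.1, qp'.1.2.2) ∈ P2Edges qp'.2) ∨
        (v = qp'.1.2.2 ∧ s(qp'.1.1, qp'.1.2.1) ∈ P2Edges qp'.2)) := by
    intro p hpD
    rw [hD, mem_filter] at hpD
    obtain ⟨hpP, hns⟩ := hpD
    obtain ⟨u, hu, huQ⟩ : ∃ u ∈ P2Verts p, u ∉ PackVerts Q := by
      by_contra hc
      push_neg at hc
      exact hns (fun x hx => hc x hx)
    obtain ⟨q, hq, p', hp', hne, hcov, v, hv, hor⟩ :=
      M2 hPpack hQpack hj hQc hmax hpP hu huQ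
    exact ⟨(q, p'), hq, hp', hne, hcov, v, hv, hor⟩
  choose f hf using hM2'
  have hinj : D.card ≤ (P \ D).card := by
    have hnotD : ∀ (p : V × V × V) (h : p ∈ D), (f p h).2 ∉ D := by
      intro p h
      rw [hD, mem_filter]
      rintro ⟨-, hns⟩
      exact hns (hf p h).2.2.2.1
    apply Finset.card_le_card_of_injOn (fun p => if h : p ∈ D then (f p h).2 else p)
    · intro p hp
      simp only [Finset.mem_coe] at hp ⊢
      rw [dif_pos hp, mem_sdiff]
      exact ⟨(hf p hp).2.1, hnotD p hp⟩
    · intro p1 hp1' p2 hp2' hg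
      have hp1 : p1 ∈ D := hp1'
      have hp2 : p2 ∈ D := hp2'
      simp only [dif_pos hp1, dif_pos hp2] at hg
      by_contra hne12
      obtain ⟨hq1, hp'1, hne1, hcov1, v1, hv1, hor1⟩ := hf p1 hp1
      obtain ⟨hq2, hp'2, hne2, hcov2, v2, hv2, hor2⟩ := hf p2 hp2
      set q1 := (f p1 hp1).1
      set q2 := (f p2 hp2).1
      set p' := (f p1 hp1).2 with hp'def
      have hp2eq : (f p2 hp2).2 = p' := hg.symm
      rw [hp2eq] at hor2 hp'2 hcov2
      have hp1P : p1 ∈ P := hDP hp1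
      have hp2P : p2 ∈ P := hDP hp2
      have hq1P2 : IsP2 G q1 := hQpack.1 q1 hq1
      have hq2P2 : IsP2 G q2 := hQpack.1 q2 hq2
      have hv12 : v1 ≠ v2 := by
        rintro rfl
        exact hne12 (path_unique hPpack hp1P hp2P hv1 hv2)
      by_cases hqq : q1 = q2
      · -- same path of Q
        rcases hor1 with ⟨hva, he1⟩ | ⟨hva, he1⟩ <;> rcases hor2 with ⟨hvb, he2⟩ | ⟨hvb, he2⟩
        · exact hv12 (hva.trans (hqq ▸ hvb.symm))
        ·
          -- he1 : s(q1.2.1, q1.2.2) ∈ P2Edges p' so q1.2.2 ∈ p' ; v2 = q2.2.2 = q1.2.2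
          have hm : q1.2.2 ∈ P2Verts p' := mem_of_mem_edge he1 (Sym2.mem_mk_right _ _)
          have : p' = p2 := path_unique hPpack hp'1 hp2P hm (by rw [← hqq] at hvb; rw [← hvb]; exact hv2)
          rw [hD, mem_filter] at hp2
          exact hp2.2 (this ▸ hcov1)
        · -- v1 = q1.2.2, v2 = q2.1 ; he2 : s(q2.2.1, q2.2.2) ∈ P2Edges p' → q2.2.2 = q1.2.2 = v1 ∈ p'
          have hm : q2.2.2 ∈ P2Verts p' := mem_of_mem_edge he2 (Sym2.mem_mk_right _ _)
          have : p' = p1 := path_unique hPpack hp'1 hp1P hm (by rw [hqq] at hva; rw [← hva]; exact hv1)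
          rw [hD, mem_filter] at hp1
          exact hp1.2 (this ▸ hcov1)
        · exact hv12 (hva.trans (hqq ▸ hvb.symm))
      · -- distinct paths of Q : four distinct vertices inside p'
        have hdisj : Disjoint (P2Verts q1) (P2Verts q2) := hQpack.2 q1 hq1 q2 hq2 hqq
        obtain ⟨a1, b1, hab1, ha1q, hb1q, ha1p, hb1p⟩ :
            ∃ a b, a ≠ b ∧ a ∈ P2Verts q1 ∧ b ∈ P2Verts q1 ∧
              a ∈ P2Verts p' ∧ b ∈ P2Verts p' := by
          rcases hor1 with ⟨-, he1⟩ | ⟨-, he1⟩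
          · exact ⟨q1.2.1, q1.2.2, hq1P2.ne23, mem_P2Verts.2 (Or.inr (Or.inl rfl)),
              mem_P2Verts.2 (Or.inr (Or.inr rfl)),
              mem_of_mem_edge he1 (Sym2.mem_mk_left _ _),
              mem_of_mem_edge he1 (Sym2.mem_mk_right _ _)⟩
          · exact ⟨q1.1, q1.2.1, hq1P2.ne12, mem_P2Verts.2 (Or.inl rfl),
              mem_P2Verts.2 (Or.inr (Or.inl rfl)),
              mem_of_mem_edge he1 (Sym2.mem_mk_left _ _),
              mem_of_mem_edge he1 (Sym2.mem_mk_right _ _)⟩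
        obtain ⟨a2, b2, hab2, ha2q, hb2q, ha2p, hb2p⟩ :
            ∃ a b, a ≠ b ∧ a ∈ P2Verts q2 ∧ b ∈ P2Verts q2 ∧
              a ∈ P2Verts p' ∧ b ∈ P2Verts p' := by
          rcases hor2 with ⟨-, he2⟩ | ⟨-, he2⟩
          · exact ⟨q2.2.1, q2.2.2, hq2P2.ne23, mem_P2Verts.2 (Or.inr (Or.inl rfl)),
              mem_P2Verts.2 (Or.inr (Or.inr rfl)),
              mem_of_mem_edge he2 (Sym2.mem_mk_left _ _),
              mem_of_mem_edge he2 (Sym2.mem_mk_right _ _)⟩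
          · exact ⟨q2.1, q2.2.1, hq2P2.ne12, mem_P2Verts.2 (Or.inl rfl),
              mem_P2Verts.2 (Or.inr (Or.inl rfl)),
              mem_of_mem_edge he2 (Sym2.mem_mk_left _ _),
              mem_of_mem_edge he2 (Sym2.mem_mk_right _ _)⟩
        have hne_a1a2 : a1 ≠ a2 := fun h => Finset.disjoint_left.1 hdisj ha1q (h ▸ ha2q)
        have hne_a1b2 : a1 ≠ b2 := fun h => Finset.disjoint_left.1 hdisj ha1q (h ▸ hb2q)
        have hne_b1a2 : b1 ≠ a2 := fun h => Finset.disjoint_left.1 hdisj hb1q (h ▸ ha2q)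
        have hne_b1b2 : b1 ≠ b2 := fun h => Finset.disjoint_left.1 hdisj hb1q (h ▸ hb2q)
        have hsub4 : ({a1, b1, a2, b2} : Finset V) ⊆ P2Verts p' := by
          intro x hx
          simp only [Finset.mem_insert, Finset.mem_singleton] at hx
          rcases hx with rfl | rfl | rfl | rfl
          · exact ha1p
          · exact hb1p
          · exact ha2p
          · exact hb2p
        have hcard4 : ({a1, b1, a2, b2} : Finset V).card = 4 := by
          rw [card_insert_of_notMem (by simp [hab1, hne_a1a2, hne_a1b2]),
            card_insert_of_notMem (by simp [hne_b1a2, hne_b1b2]),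
            card_insert_of_notMem (by simp [hab2]), card_singleton]
        have := card_le_card hsub4
        rw [hcard4, card_P2Verts (hPpack.1 p' hp'1)] at this
        omega
  have hsd : (P \ D).card = j - D.card := by
    rw [card_sdiff_of_subset hDP, hj]
  have hDle : D.card ≤ j := hj ▸ card_le_card hDP
  omega
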